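/- Let k ≥ 1 and p ≥ 1 be integers, let i₁ < ⋯ < i_k be indices in {1, …, p}, and let a_q < b_q be real numbers for q ∈ {1, …, k}. Then there exists a 01Neuro network of depth L = 2 + ⌈log₂ k⌉ on ℝ^p with sparsity w₀ = 2 (for suitable widths p₁, …, p_{L−1} and p_L = 1) whose output satisfies f_{L,1}(x) = ∏_{q=1}^{k} 1{a_q < x_{i_q} ≤ b_q} for every x ∈ ℝ^p. -/

import Mathlib

open scoped Classical

noncomputable section Stmt14Aux

namespace Stmt14Aux

/-- Widths: layer 0 has `p` inputs, layer 1 has `2k` neurons, layer `t+2` has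
`⌈k/2^t⌉ = (k-1)/2^t + 1` neurons (for `k ≥ 1`). -/
def Wd (k p : ℕ) : ℕ → ℕ
  | 0 => p
  | 1 => 2 * k
  | (t+2) => (k - 1) / 2 ^ t + 1

/-- Weights. -/
def wt (k p : ℕ) (idx : ℕ → ℕ) (l h j : ℕ) : ℝ :=
  if l = 1 then (if j = idx ((h + 1) / 2) then 1 else 0)
  else if l = 2 then
    (if j = 2 * h - 1 then (Real.sqrt 2)⁻¹ else if j = 2 * h then -(Real.sqrt 2)⁻¹ else 0)
  else if 2 * h ≤ Wd k p (l - 1) then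
    (if j = 2 * h - 1 ∨ j = 2 * h then (Real.sqrt 2)⁻¹ else 0)
  else (if j = 2 * h - 1 then 1 else 0)

/-- Biases. -/
def bs (k p : ℕ) (a b : ℕ → ℝ) (l h : ℕ) : ℝ :=
  if l = 1 then (if h % 2 = 1 then a ((h + 1) / 2) else b ((h + 1) / 2))
  else if l = 2 then (2 * Real.sqrt 2)⁻¹
  else if 2 * h ≤ Wd k p (l - 1) then 3 / (2 * Real.sqrt 2) else 1 / 2

/-- The network outputs, defined by the 01Neuro forward recursion. -/
def F (k p : ℕ) (idx : ℕ → ℕ) (a b : ℕ → ℝ) : ℕ → ℕ → (ℕ → ℝ) → ℝ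
  | 0, _, _ => 0
  | 1, h, x =>
      if bs k p a b 1 h < ∑ j ∈ Finset.Icc 1 p, wt k p idx 1 h j * x j then 1 else 0
  | (l+2), h, x =>
      if bs k p a b (l+2) h <
          ∑ j ∈ Finset.Icc 1 (Wd k p (l+1)), wt k p idx (l+2) h j * F k p idx a b (l+1) j x
      then 1 else 0

lemma Wd_one (k p : ℕ) : Wd k p 1 = 2 * k := rfl

lemma wt_one (k p : ℕ) (idx : ℕ → ℕ) (h j : ℕ) :
    wt k p idx 1 h j = if j = idx ((h + 1) / 2) then 1 else 0 := by
  unfold wt; rw [if_pos rfl]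

lemma wt_two (k p : ℕ) (idx : ℕ → ℕ) (h j : ℕ) :
    wt k p idx 2 h j =
      if j = 2 * h - 1 then (Real.sqrt 2)⁻¹ else if j = 2 * h then -(Real.sqrt 2)⁻¹ else 0 := by
  unfold wt; rw [if_neg (by omega), if_pos rfl]

lemma wt_three (k p : ℕ) (idx : ℕ → ℕ) (t h j : ℕ) :
    wt k p idx (t+3) h j =
      if 2 * h ≤ Wd k p (t+2) then
        (if j = 2 * h - 1 ∨ j = 2 * h then (Real.sqrt 2)⁻¹ else 0)
      else (if j = 2 * h - 1 then 1 else 0) := by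
  unfold wt; rw [if_neg (by omega), if_neg (by omega)]
  rfl

lemma bs_one (k p : ℕ) (a b : ℕ → ℝ) (h : ℕ) :
    bs k p a b 1 h = if h % 2 = 1 then a ((h + 1) / 2) else b ((h + 1) / 2) := by
  unfold bs; rw [if_pos rfl]

lemma bs_two (k p : ℕ) (a b : ℕ → ℝ) (h : ℕ) :
    bs k p a b 2 h = (2 * Real.sqrt 2)⁻¹ := by
  unfold bs; rw [if_neg (by omega), if_pos rfl]

lemma bs_three (k p : ℕ) (a b : ℕ → ℝ) (t h : ℕ) :
    bs k p a b (t+3) h =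
      if 2 * h ≤ Wd k p (t+2) then 3 / (2 * Real.sqrt 2) else 1 / 2 := by
  unfold bs; rw [if_neg (by omega), if_neg (by omega)]
  rfl

lemma sum_single {s : Finset ℕ} {i : ℕ} (hi : i ∈ s) (w : ℕ → ℝ)
    (hw : ∀ x ∈ s, x ≠ i → w x = 0) : ∑ x ∈ s, w x = w i :=
  Finset.sum_eq_single_of_mem i hi hw

lemma sum_two {s : Finset ℕ} {i j : ℕ} (hi : i ∈ s) (hj : j ∈ s) (hij : i ≠ j)
    (w : ℕ → ℝ) (hw : ∀ x ∈ s, x ≠ i → x ≠ j → w x = 0) :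
    ∑ x ∈ s, w x = w i + w j := by
  rw [← Finset.sum_pair hij]
  refine (Finset.sum_subset ?_ ?_).symm
  · intro x hx
    simp only [Finset.mem_insert, Finset.mem_singleton] at hx
    rcases hx with rfl | rfl <;> assumption
  · intro x hx hx'
    simp only [Finset.mem_insert, Finset.mem_singleton, not_or] at hx'
    exact hw x hx hx'.1 hx'.2

lemma card_filter_le_two {s : Finset ℕ} {i j : ℕ} (w : ℕ → ℝ)
    (hw : ∀ x ∈ s, x ≠ i → x ≠ j → w x = 0) :
    (s.filter fun x => w x ≠ 0).card ≤ 2 := by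
  calc (s.filter fun x => w x ≠ 0).card ≤ ({i, j} : Finset ℕ).card := by
        apply Finset.card_le_card
        intro x hx
        simp only [Finset.mem_filter] at hx
        by_contra hmem
        simp only [Finset.mem_insert, Finset.mem_singleton, not_or] at hmem
        exact hx.2 (hw x hx.1 hmem.1 hmem.2)
    _ ≤ 2 := (Finset.card_insert_le _ _).trans (by simp)

lemma le_Wd {k : ℕ} (hk : 1 ≤ k) (p t h : ℕ) :
    h ≤ Wd k p (t + 2) ↔ (h - 1) * 2 ^ t < k := by
  have hpos : 0 < 2 ^ t := pow_pos (by norm_num) t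
  show h ≤ (k - 1) / 2 ^ t + 1 ↔ _
  constructor
  · intro hh
    have h1 : h - 1 ≤ (k - 1) / 2 ^ t := tsub_le_iff_right.mpr hh
    exact lt_of_le_of_lt ((Nat.le_div_iff_mul_le hpos).mp h1) (Nat.sub_lt hk one_pos)
  · intro hh
    have h1 : (h - 1) * 2 ^ t ≤ k - 1 := Nat.le_pred_of_lt hh
    exact tsub_le_iff_right.mp ((Nat.le_div_iff_mul_le hpos).mpr h1)

end Stmt14Aux

end Stmt14Aux

open Stmt14Aux in
/-- For k, p ≥ 1, indices i₁ < ⋯ < i_k in {1,…,p} and reals a_q < b_q,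
there exists a 01Neuro network of depth L = 2 + ⌈log₂ k⌉ on ℝ^p with sparsity w₀ = 2
(for suitable widths, with p₀ = p and p_L = 1) whose output is
f_{L,1}(x) = ∏_{q=1}^{k} 1{a_q < x_{i_q} ≤ b_q} for every x ∈ ℝ^p.

Encoding: coordinates, layers and neurons are indexed by naturals in the ranges
`Finset.Icc 1 ·`; `weight l h j` is the j-th entry of the weight vector of neuron (l,h)
(fed by layer l−1), `bias l h` its bias, and `f l h` its 0/1 output function; unit norm
and 2-sparsity are required of every weight vector, and the neuron outputs satisfy the
01Neuro forward recursion with indicator activations. -/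
theorem stmt14 (k p : ℕ) (hk : 1 ≤ k) (hp : 1 ≤ p)
    (idx : ℕ → ℕ) (hidx_mono : StrictMonoOn idx (Finset.Icc 1 k : Set ℕ))
    (hidx_mem : ∀ q ∈ Finset.Icc 1 k, idx q ∈ Finset.Icc 1 p)
    (a b : ℕ → ℝ) (hab : ∀ q ∈ Finset.Icc 1 k, a q < b q) :
    ∃ (L : ℕ) (widths : ℕ → ℕ) (weight : ℕ → ℕ → ℕ → ℝ) (bias : ℕ → ℕ → ℝ)
      (f : ℕ → ℕ → (ℕ → ℝ) → ℝ),
      L = 2 + Nat.clog 2 k ∧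
      widths 0 = p ∧ widths L = 1 ∧
      (∀ l ∈ Finset.Icc 1 L, ∀ h ∈ Finset.Icc 1 (widths l),
        (∑ j ∈ Finset.Icc 1 (widths (l - 1)), (weight l h j) ^ 2 = 1) ∧
          ((Finset.Icc 1 (widths (l - 1))).filter fun j => weight l h j ≠ 0).card ≤ 2) ∧
      (∀ h ∈ Finset.Icc 1 (widths 1), ∀ x : ℕ → ℝ,
        f 1 h x =
          if bias 1 h < ∑ j ∈ Finset.Icc 1 p, weight 1 h j * x j then 1 else 0) ∧
      (∀ l ∈ Finset.Icc 2 L, ∀ h ∈ Finset.Icc 1 (widths l), ∀ x : ℕ → ℝ,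
        f l h x =
          if bias l h < ∑ j ∈ Finset.Icc 1 (widths (l - 1)), weight l h j * f (l - 1) j x
          then 1 else 0) ∧
      (∀ x : ℕ → ℝ,
        f L 1 x =
          ∏ q ∈ Finset.Icc 1 k,
            if a q < x (idx q) ∧ x (idx q) ≤ b q then (1 : ℝ) else 0) := by
  have hs2 : (0:ℝ) < Real.sqrt 2 := Real.sqrt_pos.mpr (by norm_num)
  have hinv : Real.sqrt 2 * (Real.sqrt 2)⁻¹ = 1 := mul_inv_cancel₀ (ne_of_gt hs2)
  have hsqhalf : ((Real.sqrt 2)⁻¹ : ℝ) ^ 2 = 1 / 2 := by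
    rw [inv_pow, Real.sq_sqrt (by norm_num : (0:ℝ) ≤ 2)]; norm_num
  have Feq1 : ∀ h (x : ℕ → ℝ), F k p idx a b 1 h x =
      if bs k p a b 1 h < ∑ j ∈ Finset.Icc 1 p, wt k p idx 1 h j * x j then 1 else 0 :=
    fun h x => by simp only [F]
  have Feq2 : ∀ l h (x : ℕ → ℝ), F k p idx a b (l+2) h x =
      if bs k p a b (l+2) h <
          ∑ j ∈ Finset.Icc 1 (Wd k p (l+1)), wt k p idx (l+2) h j * F k p idx a b (l+1) j x
      then 1 else 0 :=
    fun l h x => by simp only [F]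
  have hF01 : ∀ l h (x : ℕ → ℝ), F k p idx a b l h x = 0 ∨ F k p idx a b l h x = 1 := by
    intro l h x
    rcases l with _ | l
    · exact Or.inl rfl
    rcases l with _ | l
    · rw [show (0:ℕ)+1 = 1 from rfl, Feq1]
      exact Or.symm (ite_eq_or_eq _ _ _)
    · rw [show l+1+1 = l+2 from rfl, Feq2]
      exact Or.symm (ite_eq_or_eq _ _ _)
  have hANDif : ∀ u v : ℝ, u = 0 ∨ u = 1 → v = 0 ∨ v = 1 →
      ((if 3 / (2 * Real.sqrt 2) < (Real.sqrt 2)⁻¹ * u + (Real.sqrt 2)⁻¹ * v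
        then (1:ℝ) else 0) = u * v) := by
    have hpos : (0:ℝ) < 2 * Real.sqrt 2 := by positivity
    have hle : (Real.sqrt 2)⁻¹ ≤ 3 / (2 * Real.sqrt 2) := by
      rw [le_div_iff₀ hpos,
        show (Real.sqrt 2)⁻¹ * (2 * Real.sqrt 2) = 2 * (Real.sqrt 2 * (Real.sqrt 2)⁻¹) from by
          ring, hinv]
      norm_num
    have hlt : 3 / (2 * Real.sqrt 2) < 2 * (Real.sqrt 2)⁻¹ := by
      rw [div_lt_iff₀ hpos,
        show 2 * (Real.sqrt 2)⁻¹ * (2 * Real.sqrt 2) = 4 * (Real.sqrt 2 * (Real.sqrt 2)⁻¹) from by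
          ring, hinv]
      norm_num
    rintro u v (rfl | rfl) (rfl | rfl)
    · rw [show (Real.sqrt 2)⁻¹ * (0:ℝ) + (Real.sqrt 2)⁻¹ * 0 = 0 from by ring,
        if_neg (not_lt.mpr (by positivity))]
      norm_num
    · rw [show (Real.sqrt 2)⁻¹ * (0:ℝ) + (Real.sqrt 2)⁻¹ * 1 = (Real.sqrt 2)⁻¹ from by ring,
        if_neg (not_lt.mpr hle)]
      norm_num
    · rw [show (Real.sqrt 2)⁻¹ * (1:ℝ) + (Real.sqrt 2)⁻¹ * 0 = (Real.sqrt 2)⁻¹ from by ring,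
        if_neg (not_lt.mpr hle)]
      norm_num
    · rw [show (Real.sqrt 2)⁻¹ * (1:ℝ) + (Real.sqrt 2)⁻¹ * 1 = 2 * (Real.sqrt 2)⁻¹ from by ring,
        if_pos hlt]
      norm_num
  have hID : ∀ u : ℝ, u = 0 ∨ u = 1 → (if 1 / 2 < u then (1:ℝ) else 0) = u := by
    rintro u (rfl | rfl) <;> norm_num
  have hF1odd : ∀ h, 1 ≤ h → h ≤ k → ∀ x : ℕ → ℝ,
      F k p idx a b 1 (2*h-1) x = if a h < x (idx h) then (1:ℝ) else 0 := by
    intro h h1 h2 x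
    have hq : (2*h-1+1)/2 = h := by omega
    have hmem : idx h ∈ Finset.Icc 1 p := hidx_mem h (Finset.mem_Icc.mpr ⟨h1, h2⟩)
    have hbs : bs k p a b 1 (2*h-1) = a h := by
      rw [bs_one, if_pos (by omega : (2*h-1) % 2 = 1), hq]
    have hsum : ∑ j ∈ Finset.Icc 1 p, wt k p idx 1 (2*h-1) j * x j
        = wt k p idx 1 (2*h-1) (idx h) * x (idx h) :=
      sum_single hmem _ (fun y _ hne => by rw [wt_one, hq, if_neg hne, zero_mul])
    rw [Feq1, hbs, hsum, wt_one, hq, if_pos rfl, one_mul]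
  have hF1even : ∀ h, 1 ≤ h → h ≤ k → ∀ x : ℕ → ℝ,
      F k p idx a b 1 (2*h) x = if b h < x (idx h) then (1:ℝ) else 0 := by
    intro h h1 h2 x
    have hq : (2*h+1)/2 = h := by omega
    have hmem : idx h ∈ Finset.Icc 1 p := hidx_mem h (Finset.mem_Icc.mpr ⟨h1, h2⟩)
    have hbs : bs k p a b 1 (2*h) = b h := by
      rw [bs_one, if_neg (by omega : ¬ (2*h) % 2 = 1), hq]
    have hsum : ∑ j ∈ Finset.Icc 1 p, wt k p idx 1 (2*h) j * x j
        = wt k p idx 1 (2*h) (idx h) * x (idx h) :=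
      sum_single hmem _ (fun y _ hne => by rw [wt_one, hq, if_neg hne, zero_mul])
    rw [Feq1, hbs, hsum, wt_one, hq, if_pos rfl, one_mul]
  have hF2 : ∀ h, 1 ≤ h → h ≤ k → ∀ x : ℕ → ℝ,
      F k p idx a b 2 h x = if a h < x (idx h) ∧ x (idx h) ≤ b h then (1:ℝ) else 0 := by
    intro h h1 h2 x
    have hF2eq : F k p idx a b 2 h x =
        if bs k p a b 2 h <
            ∑ j ∈ Finset.Icc 1 (Wd k p 1), wt k p idx 2 h j * F k p idx a b 1 j x
        then 1 else 0 := Feq2 0 h x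
    have hm1 : 2*h-1 ∈ Finset.Icc 1 (Wd k p 1) :=
      Finset.mem_Icc.mpr ⟨by omega, by rw [Wd_one]; omega⟩
    have hm2 : 2*h ∈ Finset.Icc 1 (Wd k p 1) :=
      Finset.mem_Icc.mpr ⟨by omega, by rw [Wd_one]; omega⟩
    have hsum : ∑ j ∈ Finset.Icc 1 (Wd k p 1), wt k p idx 2 h j * F k p idx a b 1 j x
        = wt k p idx 2 h (2*h-1) * F k p idx a b 1 (2*h-1) x
          + wt k p idx 2 h (2*h) * F k p idx a b 1 (2*h) x :=
      sum_two hm1 hm2 (by omega) _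
        (fun y _ hn1 hn2 => by rw [wt_two, if_neg hn1, if_neg hn2, zero_mul])
    have hw1 : wt k p idx 2 h (2*h-1) = (Real.sqrt 2)⁻¹ := by rw [wt_two, if_pos rfl]
    have hw2 : wt k p idx 2 h (2*h) = -(Real.sqrt 2)⁻¹ := by
      rw [wt_two, if_neg (by omega), if_pos rfl]
    have hlt12 : (2 * Real.sqrt 2)⁻¹ < (Real.sqrt 2)⁻¹ := by
      rw [show ((2 * Real.sqrt 2)⁻¹:ℝ) = 2⁻¹ * (Real.sqrt 2)⁻¹ from by rw [mul_inv]]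
      have h0 : (0:ℝ) < (Real.sqrt 2)⁻¹ := inv_pos.mpr hs2
      linarith
    rw [hF2eq, bs_two, hsum, hw1, hw2, hF1odd h h1 h2 x, hF1even h h1 h2 x]
    by_cases hA : a h < x (idx h)
    · by_cases hB : b h < x (idx h)
      · rw [if_pos hA, if_pos hB,
          show (Real.sqrt 2)⁻¹ * (1:ℝ) + -(Real.sqrt 2)⁻¹ * 1 = 0 from by ring,
          if_neg (not_lt.mpr (by positivity)),
          if_neg (by rintro ⟨-, hle⟩; exact absurd hB (not_lt.mpr hle))]
      · rw [if_pos hA, if_neg hB,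
          show (Real.sqrt 2)⁻¹ * (1:ℝ) + -(Real.sqrt 2)⁻¹ * 0 = (Real.sqrt 2)⁻¹ from by ring,
          if_pos hlt12, if_pos ⟨hA, not_lt.mp hB⟩]
    · have hB : ¬ b h < x (idx h) :=
        fun hB => hA (lt_trans (hab h (Finset.mem_Icc.mpr ⟨h1, h2⟩)) hB)
      rw [if_neg hA, if_neg hB,
        show (Real.sqrt 2)⁻¹ * (0:ℝ) + -(Real.sqrt 2)⁻¹ * 0 = 0 from by ring,
        if_neg (not_lt.mpr (by positivity)), if_neg (fun hc => hA hc.1)]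
  -- the main induction over the AND-tree
  have main : ∀ t h, 1 ≤ h → (h - 1) * 2 ^ t < k → ∀ x : ℕ → ℝ,
      F k p idx a b (t + 2) h x =
        ∏ q ∈ Finset.Ioc ((h - 1) * 2 ^ t) (min (h * 2 ^ t) k),
          (if a q < x (idx q) ∧ x (idx q) ≤ b q then (1:ℝ) else 0) := by
    intro t
    induction t with
    | zero =>
      intro h h1 hlt x
      have hlt' : h - 1 < k := by simpa using hlt
      have hset : Finset.Ioc ((h-1) * 2^0) (min (h * 2^0) k) = {h} := by
        ext y
        simp only [Finset.mem_Ioc, Finset.mem_singleton, pow_zero, mul_one]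
        omega
      have hF : F k p idx a b (0+2) h x
          = if a h < x (idx h) ∧ x (idx h) ≤ b h then (1:ℝ) else 0 := hF2 h h1 (by omega) x
      rw [hF, hset, Finset.prod_singleton]
    | succ t ih =>
      intro h h1 hlt x
      have e1 : (2*h-1-1) * 2^t = (h-1) * 2^(t+1) := by
        rw [pow_succ, show 2*h-1-1 = (h-1)*2 from by omega]; ring
      have e2 : 2*h * 2^t = h * 2^(t+1) := by rw [pow_succ]; ring
      have hFeq : F k p idx a b (t+1+2) h x =
          if bs k p a b (t+3) h <
              ∑ j ∈ Finset.Icc 1 (Wd k p (t+2)),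
                wt k p idx (t+3) h j * F k p idx a b (t+2) j x
          then 1 else 0 := Feq2 (t+1) h x
      rw [hFeq]
      by_cases hcase : 2*h ≤ Wd k p (t+2)
      · have h2hk : (2*h - 1) * 2^t < k := (le_Wd hk p t (2*h)).mp hcase
        have hm1 : 2*h-1 ∈ Finset.Icc 1 (Wd k p (t+2)) :=
          Finset.mem_Icc.mpr ⟨by omega, by omega⟩
        have hm2 : 2*h ∈ Finset.Icc 1 (Wd k p (t+2)) := Finset.mem_Icc.mpr ⟨by omega, hcase⟩
        have hsum : ∑ j ∈ Finset.Icc 1 (Wd k p (t+2)),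
              wt k p idx (t+3) h j * F k p idx a b (t+2) j x
            = wt k p idx (t+3) h (2*h-1) * F k p idx a b (t+2) (2*h-1) x
              + wt k p idx (t+3) h (2*h) * F k p idx a b (t+2) (2*h) x :=
          sum_two hm1 hm2 (by omega) _ (fun y _ hn1 hn2 => by
            rw [wt_three, if_pos hcase, if_neg (not_or.mpr ⟨hn1, hn2⟩), zero_mul])
        have hw1 : wt k p idx (t+3) h (2*h-1) = (Real.sqrt 2)⁻¹ := by
          rw [wt_three, if_pos hcase, if_pos (Or.inl rfl)]
        have hw2 : wt k p idx (t+3) h (2*h) = (Real.sqrt 2)⁻¹ := by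
          rw [wt_three, if_pos hcase, if_pos (Or.inr rfl)]
        have hbsv : bs k p a b (t+3) h = 3 / (2 * Real.sqrt 2) := by
          rw [bs_three, if_pos hcase]
        have hmerge := Finset.prod_Ioc_consecutive
          (fun q => if a q < x (idx q) ∧ x (idx q) ≤ b q then (1:ℝ) else 0)
          (show (2*h-1-1)*2^t ≤ (2*h-1)*2^t from Nat.mul_le_mul (by omega) le_rfl)
          (show (2*h-1)*2^t ≤ min (2*h*2^t) k from
            le_min (Nat.mul_le_mul (by omega) le_rfl) (le_of_lt h2hk))
        rw [hsum, hw1, hw2, hbsv, hANDif _ _ (hF01 _ _ _) (hF01 _ _ _),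
          ih (2*h-1) (by omega) (by rw [e1]; exact hlt), ih (2*h) (by omega) h2hk,
          min_eq_left (le_of_lt h2hk), hmerge, e1, e2]
      · have hub : 2*h-1 ≤ Wd k p (t+2) :=
          (le_Wd hk p t (2*h-1)).mpr (by rw [e1]; exact hlt)
        have hm1 : 2*h-1 ∈ Finset.Icc 1 (Wd k p (t+2)) := Finset.mem_Icc.mpr ⟨by omega, hub⟩
        have hsum : ∑ j ∈ Finset.Icc 1 (Wd k p (t+2)),
              wt k p idx (t+3) h j * F k p idx a b (t+2) j x
            = wt k p idx (t+3) h (2*h-1) * F k p idx a b (t+2) (2*h-1) x :=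
          sum_single hm1 _ (fun y _ hn => by
            rw [wt_three, if_neg hcase, if_neg hn, zero_mul])
        have hw1 : wt k p idx (t+3) h (2*h-1) = 1 := by
          rw [wt_three, if_neg hcase, if_pos rfl]
        have hbsv : bs k p a b (t+3) h = 1 / 2 := by rw [bs_three, if_neg hcase]
        have hW : Wd k p (t+2) = (k-1)/2^t + 1 := rfl
        rw [hW] at hcase
        have h2 : (k-1)/2^t < 2*h - 1 :=
          Nat.lt_sub_of_add_lt (Nat.lt_of_not_le hcase)
        have hlb : k ≤ (2*h-1) * 2^t :=
          Nat.le_of_pred_lt ((Nat.div_lt_iff_lt_mul (pow_pos (by norm_num) t)).mp h2)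
        rw [hsum, hw1, one_mul, hbsv, hID _ (hF01 _ _ _),
          ih (2*h-1) (by omega) (by rw [e1]; exact hlt),
          min_eq_right hlb,
          min_eq_right (le_trans hlb (by rw [← e2]; exact Nat.mul_le_mul (by omega) le_rfl)),
          e1]
  refine ⟨2 + Nat.clog 2 k, Wd k p, wt k p idx, bs k p a b, F k p idx a b,
    rfl, rfl, ?_, ?_, ?_, ?_, ?_⟩
  · -- widths L = 1
    have hkle : k ≤ 2 ^ Nat.clog 2 k := Nat.le_pow_clog (by norm_num) k
    rw [show (2:ℕ) + Nat.clog 2 k = Nat.clog 2 k + 2 from by omega]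
    show (k - 1) / 2 ^ (Nat.clog 2 k) + 1 = 1
    rw [Nat.div_eq_of_lt (by omega)]
  · -- unit norm and 2-sparsity
    intro l hl h hh
    rw [Finset.mem_Icc] at hl hh
    obtain ⟨hl1, hlL⟩ := hl
    obtain ⟨hh1, hh2⟩ := hh
    by_cases hl1' : l = 1
    · subst hl1'
      rw [Wd_one] at hh2
      have hq : (h+1)/2 ∈ Finset.Icc 1 k := Finset.mem_Icc.mpr ⟨by omega, by omega⟩
      have hmem : idx ((h+1)/2) ∈ Finset.Icc 1 (Wd k p (1-1)) := hidx_mem _ hq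
      constructor
      · have hs : (∑ j ∈ Finset.Icc 1 (Wd k p (1-1)), (wt k p idx 1 h j)^2)
            = (wt k p idx 1 h (idx ((h+1)/2)))^2 :=
          sum_single hmem _ (fun y _ hne => by rw [wt_one, if_neg hne]; norm_num)
        rw [hs, wt_one, if_pos rfl]; norm_num
      · exact card_filter_le_two (i := idx ((h+1)/2)) (j := idx ((h+1)/2)) _
          (fun y _ hn _ => by rw [wt_one, if_neg hn])
    by_cases hl2' : l = 2
    · subst hl2'
      have hhk : h ≤ k := by
        have h2 := hh2
        rw [show Wd k p 2 = (k-1)/2^0 + 1 from rfl, pow_zero, Nat.div_one] at h2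
        omega
      have hm1 : 2*h-1 ∈ Finset.Icc 1 (Wd k p (2-1)) :=
        Finset.mem_Icc.mpr ⟨by omega, show 2*h-1 ≤ 2*k by omega⟩
      have hm2 : 2*h ∈ Finset.Icc 1 (Wd k p (2-1)) :=
        Finset.mem_Icc.mpr ⟨by omega, show 2*h ≤ 2*k by omega⟩
      constructor
      · have hs : (∑ j ∈ Finset.Icc 1 (Wd k p (2-1)), (wt k p idx 2 h j)^2)
            = (wt k p idx 2 h (2*h-1))^2 + (wt k p idx 2 h (2*h))^2 :=
          sum_two hm1 hm2 (by omega) _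
            (fun y _ hn1 hn2 => by rw [wt_two, if_neg hn1, if_neg hn2]; norm_num)
        rw [hs, wt_two, if_pos rfl, wt_two, if_neg (by omega : ¬ 2*h = 2*h-1), if_pos rfl,
          neg_sq, hsqhalf]
        norm_num
      · exact card_filter_le_two (i := 2*h-1) (j := 2*h) _
          (fun y _ hn1 hn2 => by rw [wt_two, if_neg hn1, if_neg hn2])
    obtain ⟨m, rfl⟩ : ∃ m, l = m + 3 := ⟨l - 3, by omega⟩
    have hWle : (h-1) * 2^(m+1) < k :=
      (le_Wd hk p (m+1) h).mp (show h ≤ Wd k p (m+1+2) from hh2)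
    have e1 : (2*h-1-1) * 2^m = (h-1) * 2^(m+1) := by
      rw [pow_succ, show 2*h-1-1 = (h-1)*2 from by omega]; ring
    have hub : 2*h-1 ≤ Wd k p (m+2) := (le_Wd hk p m (2*h-1)).mpr (by rw [e1]; exact hWle)
    have hm1 : 2*h-1 ∈ Finset.Icc 1 (Wd k p (m+3-1)) := Finset.mem_Icc.mpr ⟨by omega, hub⟩
    by_cases hcase : 2*h ≤ Wd k p (m+2)
    · have hm2 : 2*h ∈ Finset.Icc 1 (Wd k p (m+3-1)) := Finset.mem_Icc.mpr ⟨by omega, hcase⟩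
      constructor
      · have hs : (∑ j ∈ Finset.Icc 1 (Wd k p (m+3-1)), (wt k p idx (m+3) h j)^2)
            = (wt k p idx (m+3) h (2*h-1))^2 + (wt k p idx (m+3) h (2*h))^2 :=
          sum_two hm1 hm2 (by omega) _ (fun y _ hn1 hn2 => by
            rw [wt_three, if_pos hcase, if_neg (not_or.mpr ⟨hn1, hn2⟩)]; norm_num)
        rw [hs, wt_three, if_pos hcase, if_pos (Or.inl rfl),
          wt_three, if_pos hcase, if_pos (Or.inr rfl), hsqhalf]
        norm_num
      · exact card_filter_le_two (i := 2*h-1) (j := 2*h) _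
          (fun y _ hn1 hn2 => by rw [wt_three, if_pos hcase, if_neg (not_or.mpr ⟨hn1, hn2⟩)])
    · constructor
      · have hs : (∑ j ∈ Finset.Icc 1 (Wd k p (m+3-1)), (wt k p idx (m+3) h j)^2)
            = (wt k p idx (m+3) h (2*h-1))^2 :=
          sum_single hm1 _ (fun y _ hn => by
            rw [wt_three, if_neg hcase, if_neg hn]; norm_num)
        rw [hs, wt_three, if_neg hcase, if_pos rfl]; norm_num
      · exact card_filter_le_two (i := 2*h-1) (j := 2*h-1) _
          (fun y _ hn _ => by rw [wt_three, if_neg hcase, if_neg hn])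
  · -- layer 1 forward rule
    intro h _ x
    exact Feq1 h x
  · -- forward recursion for layers ≥ 2
    intro l hl h hh x
    rw [Finset.mem_Icc] at hl
    obtain ⟨m, rfl⟩ : ∃ m, l = m + 2 := ⟨l - 2, by omega⟩
    exact (Feq2 m h x :
      F k p idx a b (m+2) h x =
        if bs k p a b (m+2) h <
            ∑ j ∈ Finset.Icc 1 (Wd k p (m+2-1)),
              wt k p idx (m+2) h j * F k p idx a b (m+2-1) j x
        then 1 else 0)
  · -- output identity
    intro x
    have hkle : k ≤ 2 ^ Nat.clog 2 k := Nat.le_pow_clog (by norm_num) k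
    rw [show (2:ℕ) + Nat.clog 2 k = Nat.clog 2 k + 2 from by omega]
    have hset : Finset.Ioc ((1-1) * 2^(Nat.clog 2 k)) (min (1 * 2^(Nat.clog 2 k)) k)
        = Finset.Icc 1 k := by
      rw [show (1-1) * 2^(Nat.clog 2 k) = 0 from by simp,
        min_eq_right (by simpa using hkle)]
      ext y
      simp only [Finset.mem_Ioc, Finset.mem_Icc]
      omega
    rw [main (Nat.clog 2 k) 1 le_rfl (by simp; omega), hset]
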